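/- Any three-manifold with a Heegaard splitting of genus zero is homeomorphic to the three-sphere (via the Alexander trick): let M be a compact Hausdorff topological space, and let B₁ and B₂ be closed subsets of M with M = B₁ ∪ B₂. Suppose there are homeomorphisms φ₁ and φ₂ from the closed unit ball of EuclideanSpace ℝ (Fin 3) onto B₁ and onto B₂ (each with the subspace topology) such that B₁ ∩ B₂ = φ₁(unit sphere) = φ₂(unit sphere). Then M is homeomorphic to the unit sphere in EuclideanSpace ℝ (Fin 4). -/

import Mathlib

open Metric Function Set

noncomputable section AlexanderAux

/-- squares cancel for nonneg reals -/
lemma sq_cancel_aux {a b : ℝ} (ha : 0 ≤ a) (hb : 0 ≤ b) (h : a ^ 2 = b ^ 2) : a = b := by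
  nlinarith [sq_nonneg (a - b), sq_nonneg (a + b)]

/-- The Alexander (radial) extension of a map of the unit sphere to the ball. -/
def alexExt (g : EuclideanSpace ℝ (Fin 3) → EuclideanSpace ℝ (Fin 3))
    (y : EuclideanSpace ℝ (Fin 3)) : EuclideanSpace ℝ (Fin 3) :=
  ‖y‖ • g (‖y‖⁻¹ • y)

variable {g : EuclideanSpace ℝ (Fin 3) → EuclideanSpace ℝ (Fin 3)}

lemma alexExt_zero : alexExt g 0 = 0 := by simp [alexExt]

lemma norm_inv_smul {y : EuclideanSpace ℝ (Fin 3)} (hy : y ≠ 0) : ‖‖y‖⁻¹ • y‖ = 1 := by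
  rw [norm_smul, norm_inv, norm_norm, inv_mul_cancel₀ (norm_ne_zero_iff.mpr hy)]

lemma alexExt_norm (hgs : ∀ x, ‖x‖ = 1 → ‖g x‖ = 1) (y : EuclideanSpace ℝ (Fin 3)) :
    ‖alexExt g y‖ = ‖y‖ := by
  rcases eq_or_ne y 0 with rfl | hy
  · simp [alexExt]
  · rw [alexExt, norm_smul, norm_norm, hgs _ (norm_inv_smul hy), mul_one]

lemma alexExt_sphere (y : EuclideanSpace ℝ (Fin 3)) (hy : ‖y‖ = 1) : alexExt g y = g y := by
  rw [alexExt, hy, inv_one, one_smul, one_smul]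

lemma alexExt_continuous (hg : ContinuousOn g (sphere (0 : EuclideanSpace ℝ (Fin 3)) 1))
    (hgs : ∀ x, ‖x‖ = 1 → ‖g x‖ = 1) : Continuous (alexExt g) := by
  rw [continuous_iff_continuousAt]
  intro y
  rcases eq_or_ne y 0 with rfl | hy
  · have hnorm : ∀ z, ‖alexExt g z‖ = ‖z‖ := alexExt_norm hgs
    rw [ContinuousAt, alexExt_zero]
    rw [tendsto_zero_iff_norm_tendsto_zero]
    simp only [hnorm]
    exact continuous_norm.tendsto' 0 0 norm_zero
  · have hopen : IsOpen {z : EuclideanSpace ℝ (Fin 3) | z ≠ 0} := isOpen_compl_singleton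
    have hcont : ContinuousOn (alexExt g) {z : EuclideanSpace ℝ (Fin 3) | z ≠ 0} := by
      apply ContinuousOn.smul continuous_norm.continuousOn
      apply hg.comp
      · exact ((continuous_norm.continuousOn.inv₀ (fun z hz => norm_ne_zero_iff.mpr hz)).smul
          continuousOn_id)
      · intro z hz
        exact mem_sphere_zero_iff_norm.mpr (norm_inv_smul hz)
    exact hcont.continuousAt (hopen.mem_nhds hy)

lemma alexExt_injective (hgi : ∀ x₁ x₂, ‖x₁‖ = 1 → ‖x₂‖ = 1 → g x₁ = g x₂ → x₁ = x₂)
    (hgs : ∀ x, ‖x‖ = 1 → ‖g x‖ = 1) : Function.Injective (alexExt g) := by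
  intro y₁ y₂ h
  have hn : ‖y₁‖ = ‖y₂‖ := by
    rw [← alexExt_norm hgs y₁, ← alexExt_norm hgs y₂, h]
  rcases eq_or_ne y₁ 0 with rfl | h1
  · have : ‖y₂‖ = 0 := by simpa using hn.symm
    exact (norm_eq_zero.mp this).symm
  · have h2 : y₂ ≠ 0 := by
      intro h2; rw [h2, norm_zero] at hn; exact h1 (norm_eq_zero.mp hn)
    have hne : ‖y₁‖ ≠ 0 := norm_ne_zero_iff.mpr h1
    rw [alexExt, alexExt, ← hn] at h
    have hgeq : g (‖y₁‖⁻¹ • y₁) = g (‖y₁‖⁻¹ • y₂) := smul_right_injective _ hne h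
    have := hgi _ _ (norm_inv_smul h1) (by rw [hn]; exact norm_inv_smul h2) hgeq
    have := congrArg (fun z => ‖y₁‖ • z) this
    simpa [smul_smul, mul_inv_cancel₀ hne] using this

lemma alexExt_surj (hgsurj : ∀ z, ‖z‖ = 1 → ∃ x, ‖x‖ = 1 ∧ g x = z)
    (z : EuclideanSpace ℝ (Fin 3)) : ∃ y, ‖y‖ = ‖z‖ ∧ alexExt g y = z := by
  rcases eq_or_ne z 0 with rfl | hz
  · exact ⟨0, by simp, alexExt_zero⟩
  · obtain ⟨x, hx1, hx2⟩ := hgsurj (‖z‖⁻¹ • z) (norm_inv_smul hz)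
    have hzne : ‖z‖ ≠ 0 := norm_ne_zero_iff.mpr hz
    refine ⟨‖z‖ • x, ?_, ?_⟩
    · rw [norm_smul, norm_norm, hx1, mul_one]
    · have hn : ‖‖z‖ • x‖ = ‖z‖ := by rw [norm_smul, norm_norm, hx1, mul_one]
      rw [alexExt, hn, smul_smul, inv_mul_cancel₀ hzne, one_smul, hx2, smul_smul,
        mul_inv_cancel₀ hzne, one_smul]

/-- radial retraction onto the closed unit ball -/
def ballProj (x : EuclideanSpace ℝ (Fin 3)) : ↥(closedBall (0 : EuclideanSpace ℝ (Fin 3)) 1) :=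
  ⟨(max 1 ‖x‖)⁻¹ • x, by
    rw [mem_closedBall_zero_iff, norm_smul, norm_inv, Real.norm_eq_abs,
      abs_of_pos (lt_of_lt_of_le one_pos (le_max_left _ _))]
    rw [inv_mul_le_iff₀ (lt_of_lt_of_le one_pos (le_max_left _ _)), mul_one]
    exact le_max_right _ _⟩

lemma ballProj_continuous : Continuous ballProj := by
  apply Continuous.subtype_mk
  exact ((continuous_const.max continuous_norm).inv₀
    (fun x => ne_of_gt (lt_of_lt_of_le one_pos (le_max_left _ _)))).smul continuous_id

lemma ballProj_eq {x : EuclideanSpace ℝ (Fin 3)} (h : ‖x‖ ≤ 1) :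
    (ballProj x : EuclideanSpace ℝ (Fin 3)) = x := by
  simp [ballProj, max_eq_left h]

end AlexanderAux

noncomputable section FourDAux

def toE3 (p : EuclideanSpace ℝ (Fin 4)) : EuclideanSpace ℝ (Fin 3) :=
  (EuclideanSpace.equiv (Fin 3) ℝ).symm (fun i => p i.castSucc)

def mk4 (y : EuclideanSpace ℝ (Fin 3)) (t : ℝ) : EuclideanSpace ℝ (Fin 4) :=
  (EuclideanSpace.equiv (Fin 4) ℝ).symm (Fin.lastCases t (fun j => y j))

@[simp] lemma toE3_apply (p : EuclideanSpace ℝ (Fin 4)) (i : Fin 3) :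
    toE3 p i = p i.castSucc := rfl

@[simp] lemma mk4_castSucc (y : EuclideanSpace ℝ (Fin 3)) (t : ℝ) (i : Fin 3) :
    mk4 y t i.castSucc = y i := by
  simp [mk4, EuclideanSpace.equiv]

@[simp] lemma mk4_last (y : EuclideanSpace ℝ (Fin 3)) (t : ℝ) :
    mk4 y t (Fin.last 3) = t := by
  simp [mk4, EuclideanSpace.equiv]
  exact Fin.lastCases_last

lemma three_eq_last : (3 : Fin 4) = Fin.last 3 := rfl

@[simp] lemma toE3_mk4 (y : EuclideanSpace ℝ (Fin 3)) (t : ℝ) : toE3 (mk4 y t) = y := by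
  ext i; simp

lemma continuous_toE3 : Continuous toE3 := by
  apply (EuclideanSpace.equiv (Fin 3) ℝ).symm.continuous.comp
  exact continuous_pi fun i => (EuclideanSpace.proj (i.castSucc : Fin 4)).continuous.congr
    (fun p => rfl)

lemma norm_sq_eq (p : EuclideanSpace ℝ (Fin 4)) :
    ‖p‖ ^ 2 = ‖toE3 p‖ ^ 2 + (p 3) ^ 2 := by
  rw [EuclideanSpace.norm_eq, EuclideanSpace.norm_eq,
    Real.sq_sqrt (by positivity), Real.sq_sqrt (by positivity)]
  rw [Fin.sum_univ_castSucc (f := fun i => ‖p i‖ ^ 2)]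
  simp [three_eq_last, Real.norm_eq_abs, sq_abs]

lemma ext4 {p q : EuclideanSpace ℝ (Fin 4)} (h1 : toE3 p = toE3 q) (h2 : p 3 = q 3) :
    p = q := by
  ext i
  refine Fin.lastCases ?_ ?_ i
  · exact h2
  · intro j
    have := congrArg (fun v => v j) h1
    simpa using this

end FourDAux

/-- Any three-manifold with a Heegaard splitting of genus zero is homeomorphic
to the three-sphere: if a compact Hausdorff space `M` is the union of two
closed subsets `B₁` and `B₂`, each homeomorphic to the closed unit three-ball
via homeomorphisms carrying the unit two-sphere onto `B₁ ∩ B₂`, then `M` is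
homeomorphic to the unit sphere in `EuclideanSpace ℝ (Fin 4)`. -/
theorem genus_zero_splitting_gives_three_sphere
    (M : Type*) [TopologicalSpace M] [CompactSpace M] [T2Space M]
    (B₁ B₂ : Set M) (hB₁ : IsClosed B₁) (hB₂ : IsClosed B₂)
    (hM : B₁ ∪ B₂ = Set.univ)
    (φ₁ : ↥(Metric.closedBall (0 : EuclideanSpace ℝ (Fin 3)) 1) → M)
    (hφ₁ : Topology.IsEmbedding φ₁) (hφ₁r : Set.range φ₁ = B₁)
    (hφ₁s : φ₁ '' {x | ‖(x : EuclideanSpace ℝ (Fin 3))‖ = 1} = B₁ ∩ B₂)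
    (φ₂ : ↥(Metric.closedBall (0 : EuclideanSpace ℝ (Fin 3)) 1) → M)
    (hφ₂ : Topology.IsEmbedding φ₂) (hφ₂r : Set.range φ₂ = B₂)
    (hφ₂s : φ₂ '' {x | ‖(x : EuclideanSpace ℝ (Fin 3))‖ = 1} = B₁ ∩ B₂) :
    Nonempty (M ≃ₜ ↥(Metric.sphere (0 : EuclideanSpace ℝ (Fin 4)) 1)) := by
  classical
  haveI : Nonempty ↥(Metric.closedBall (0 : EuclideanSpace ℝ (Fin 3)) 1) :=
    ⟨⟨0, by simp⟩⟩
  have hinj1 : Function.Injective φ₁ := hφ₁.injective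
  have hinj2 : Function.Injective φ₂ := hφ₂.injective
  -- points of the boundary sphere land in B₁ ∩ B₂
  have hm1 : ∀ b : ↥(Metric.closedBall (0 : EuclideanSpace ℝ (Fin 3)) 1),
      ‖(b : EuclideanSpace ℝ (Fin 3))‖ = 1 → φ₁ b ∈ B₁ ∩ B₂ := by
    intro b hb; rw [← hφ₁s]; exact ⟨b, hb, rfl⟩
  have hm2 : ∀ b : ↥(Metric.closedBall (0 : EuclideanSpace ℝ (Fin 3)) 1),
      ‖(b : EuclideanSpace ℝ (Fin 3))‖ = 1 → φ₂ b ∈ B₁ ∩ B₂ := by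
    intro b hb; rw [← hφ₂s]; exact ⟨b, hb, rfl⟩
  -- Step 1: the gluing map g = φ₂⁻¹ ∘ φ₁ on the unit sphere
  obtain ⟨g, hgc, hgcomp⟩ :
      ∃ g : EuclideanSpace ℝ (Fin 3) → EuclideanSpace ℝ (Fin 3),
        ContinuousOn g (Metric.sphere (0 : EuclideanSpace ℝ (Fin 3)) 1) ∧
        (∀ x : ↥(Metric.closedBall (0 : EuclideanSpace ℝ (Fin 3)) 1),
          ‖(x : EuclideanSpace ℝ (Fin 3))‖ = 1 →
          ∃ z : ↥(Metric.closedBall (0 : EuclideanSpace ℝ (Fin 3)) 1),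
            (z : EuclideanSpace ℝ (Fin 3)) = g x ∧ φ₂ z = φ₁ x) := by
    refine ⟨fun x => ((Function.invFun φ₂ (φ₁ (ballProj x)) :
        ↥(Metric.closedBall (0 : EuclideanSpace ℝ (Fin 3)) 1)) : EuclideanSpace ℝ (Fin 3)),
      ?_, ?_⟩
    · rw [continuousOn_iff_continuous_restrict]
      have hmem : ∀ s : ↥(Metric.sphere (0 : EuclideanSpace ℝ (Fin 3)) 1),
          ∃ a, φ₂ a = φ₁ (ballProj (s : EuclideanSpace ℝ (Fin 3))) := by
        intro s
        have hs : ‖(s : EuclideanSpace ℝ (Fin 3))‖ = 1 := mem_sphere_zero_iff_norm.mp s.2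
        have hb : ((ballProj (s : EuclideanSpace ℝ (Fin 3))) :
            EuclideanSpace ℝ (Fin 3)) = (s : EuclideanSpace ℝ (Fin 3)) :=
          ballProj_eq (le_of_eq hs)
        have : φ₁ (ballProj (s : EuclideanSpace ℝ (Fin 3))) ∈ B₂ :=
          (hm1 _ (by rw [hb, hs])).2
        rw [← hφ₂r] at this
        exact this
      have hc2 : Continuous fun s : ↥(Metric.sphere (0 : EuclideanSpace ℝ (Fin 3)) 1) =>
          Function.invFun φ₂ (φ₁ (ballProj (s : EuclideanSpace ℝ (Fin 3)))) := by
        rw [hφ₂.continuous_iff]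
        apply Continuous.congr
          (f := fun s : ↥(Metric.sphere (0 : EuclideanSpace ℝ (Fin 3)) 1) =>
            φ₁ (ballProj (s : EuclideanSpace ℝ (Fin 3))))
        · exact hφ₁.continuous.comp (ballProj_continuous.comp continuous_subtype_val)
        · intro s
          exact (Function.invFun_eq (hmem s)).symm
      exact continuous_subtype_val.comp hc2
    · intro x hx
      have hb : ((ballProj (x : EuclideanSpace ℝ (Fin 3))) :
          EuclideanSpace ℝ (Fin 3)) = (x : EuclideanSpace ℝ (Fin 3)) :=
        ballProj_eq (le_of_eq hx)
      have hbx : ballProj (x : EuclideanSpace ℝ (Fin 3)) = x := Subtype.ext hb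
      have hmem : φ₁ x ∈ Set.range φ₂ := by rw [hφ₂r]; exact (hm1 x hx).2
      refine ⟨Function.invFun φ₂ (φ₁ x), by simp only [hbx], Function.invFun_eq hmem⟩
  -- derived properties of g
  have hgnorm : ∀ x : EuclideanSpace ℝ (Fin 3), ‖x‖ = 1 → ‖g x‖ = 1 := by
    intro x hx
    obtain ⟨z, hz1, hz2⟩ := hgcomp ⟨x, by
      rw [mem_closedBall_zero_iff, hx]⟩ hx
    have : φ₂ z ∈ B₁ ∩ B₂ := by rw [hz2]; exact hm1 _ hx
    rw [← hφ₂s] at this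
    obtain ⟨w, hw1, hw2⟩ := this
    have : w = z := hinj2 hw2
    rw [← hz1, ← this]
    exact hw1
  have hginj : ∀ x₁ x₂ : EuclideanSpace ℝ (Fin 3), ‖x₁‖ = 1 → ‖x₂‖ = 1 →
      g x₁ = g x₂ → x₁ = x₂ := by
    intro x₁ x₂ h1 h2 heq
    obtain ⟨z₁, hz11, hz12⟩ := hgcomp ⟨x₁, by rw [mem_closedBall_zero_iff, h1]⟩ h1
    obtain ⟨z₂, hz21, hz22⟩ := hgcomp ⟨x₂, by rw [mem_closedBall_zero_iff, h2]⟩ h2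
    have hz : z₁ = z₂ := Subtype.ext (by rw [hz11, hz21, heq])
    have : φ₁ (⟨x₁, by rw [mem_closedBall_zero_iff, h1]⟩ :
        ↥(Metric.closedBall (0 : EuclideanSpace ℝ (Fin 3)) 1)) =
        φ₁ ⟨x₂, by rw [mem_closedBall_zero_iff, h2]⟩ := by
      rw [← hz12, ← hz22, hz]
    exact congrArg Subtype.val (hinj1 this)
  have hgsurj : ∀ z : EuclideanSpace ℝ (Fin 3), ‖z‖ = 1 → ∃ x, ‖x‖ = 1 ∧ g x = z := by
    intro z hz
    have hzb : z ∈ Metric.closedBall (0 : EuclideanSpace ℝ (Fin 3)) 1 := by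
      rw [mem_closedBall_zero_iff, hz]
    have : φ₂ ⟨z, hzb⟩ ∈ B₁ ∩ B₂ := hm2 _ hz
    rw [← hφ₁s] at this
    obtain ⟨x, hx1, hx2⟩ := this
    obtain ⟨w, hw1, hw2⟩ := hgcomp x hx1
    have : w = ⟨z, hzb⟩ := hinj2 (by rw [hw2, hx2])
    exact ⟨(x : EuclideanSpace ℝ (Fin 3)), hx1, by rw [← hw1, this]⟩
  -- Step 2: the Alexander extension A of g
  set A : EuclideanSpace ℝ (Fin 3) → EuclideanSpace ℝ (Fin 3) := alexExt g with hA
  have hAnorm : ∀ y, ‖A y‖ = ‖y‖ := alexExt_norm hgnorm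
  have hAcont : Continuous A := alexExt_continuous hgc hgnorm
  have hAinj : Function.Injective A := alexExt_injective hginj hgnorm
  have hAsurj : ∀ z : EuclideanSpace ℝ (Fin 3), ∃ y, ‖y‖ = ‖z‖ ∧ A y = z :=
    alexExt_surj hgsurj
  have hAball : ∀ y : EuclideanSpace ℝ (Fin 3),
      y ∈ Metric.closedBall (0 : EuclideanSpace ℝ (Fin 3)) 1 →
      A y ∈ Metric.closedBall (0 : EuclideanSpace ℝ (Fin 3)) 1 := by
    intro y hy
    rw [mem_closedBall_zero_iff] at hy ⊢
    rw [hAnorm]; exact hy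
  -- Step 3: coordinates on the 3-sphere
  have hyball : ∀ p : ↥(Metric.sphere (0 : EuclideanSpace ℝ (Fin 4)) 1),
      toE3 (p : EuclideanSpace ℝ (Fin 4)) ∈
        Metric.closedBall (0 : EuclideanSpace ℝ (Fin 3)) 1 := by
    intro p
    have hp : ‖(p : EuclideanSpace ℝ (Fin 4))‖ = 1 := mem_sphere_zero_iff_norm.mp p.2
    have := norm_sq_eq (p : EuclideanSpace ℝ (Fin 4))
    rw [mem_closedBall_zero_iff]
    nlinarith [norm_nonneg (toE3 (p : EuclideanSpace ℝ (Fin 4))),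
      sq_nonneg ((p : EuclideanSpace ℝ (Fin 4)) 3)]
  have hsq : ∀ p : ↥(Metric.sphere (0 : EuclideanSpace ℝ (Fin 4)) 1),
      ‖toE3 (p : EuclideanSpace ℝ (Fin 4))‖ ^ 2 +
        ((p : EuclideanSpace ℝ (Fin 4)) 3) ^ 2 = 1 := by
    intro p
    have hp : ‖(p : EuclideanSpace ℝ (Fin 4))‖ = 1 := mem_sphere_zero_iff_norm.mp p.2
    have := norm_sq_eq (p : EuclideanSpace ℝ (Fin 4))
    rw [hp] at this; rw [← this]; ring
  -- the candidate homeomorphism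
  set f : ↥(Metric.sphere (0 : EuclideanSpace ℝ (Fin 4)) 1) → M :=
    fun p => if 0 ≤ (p : EuclideanSpace ℝ (Fin 4)) 3 then
      φ₁ ⟨toE3 (p : EuclideanSpace ℝ (Fin 4)), hyball p⟩
    else φ₂ ⟨A (toE3 (p : EuclideanSpace ℝ (Fin 4))),
      hAball _ (hyball p)⟩ with hf
  -- on the equator both branches agree
  have hequator : ∀ p : ↥(Metric.sphere (0 : EuclideanSpace ℝ (Fin 4)) 1),
      (p : EuclideanSpace ℝ (Fin 4)) 3 = 0 →
      φ₁ ⟨toE3 (p : EuclideanSpace ℝ (Fin 4)), hyball p⟩ =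
      φ₂ ⟨A (toE3 (p : EuclideanSpace ℝ (Fin 4))), hAball _ (hyball p)⟩ := by
    intro p hp3
    have hn : ‖toE3 (p : EuclideanSpace ℝ (Fin 4))‖ = 1 := by
      have := hsq p
      rw [hp3] at this
      exact sq_cancel_aux (norm_nonneg _) zero_le_one (by nlinarith)
    obtain ⟨z, hz1, hz2⟩ := hgcomp ⟨toE3 (p : EuclideanSpace ℝ (Fin 4)), hyball p⟩ hn
    have hzz : (⟨A (toE3 (p : EuclideanSpace ℝ (Fin 4))), hAball _ (hyball p)⟩ :
        ↥(Metric.closedBall (0 : EuclideanSpace ℝ (Fin 3)) 1)) = z := by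
      apply Subtype.ext
      rw [hz1]
      exact alexExt_sphere _ hn
    rw [hzz, hz2]
  -- continuity
  have hfc : Continuous f := by
    rw [hf]
    apply Continuous.if_le
    · exact hφ₁.continuous.comp (Continuous.subtype_mk
        (continuous_toE3.comp continuous_subtype_val) _)
    · exact hφ₂.continuous.comp (Continuous.subtype_mk
        (hAcont.comp (continuous_toE3.comp continuous_subtype_val)) _)
    · exact continuous_const
    · exact (EuclideanSpace.proj (3 : Fin 4)).continuous.comp continuous_subtype_val
    · intro p hp
      exact hequator p hp.symm
  -- injectivity
  have hfinj : Function.Injective f := by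
    intro p q hpq
    simp only [hf] at hpq
    by_cases hp : 0 ≤ (p : EuclideanSpace ℝ (Fin 4)) 3 <;>
      by_cases hq : 0 ≤ (q : EuclideanSpace ℝ (Fin 4)) 3
    · rw [if_pos hp, if_pos hq] at hpq
      have hy := congrArg Subtype.val (hinj1 hpq)
      simp only at hy
      apply Subtype.ext
      apply ext4 hy
      have h1 := hsq p; have h2 := hsq q
      rw [hy] at h1
      exact sq_cancel_aux hp hq (by nlinarith)
    · -- cross case: impossible
      rw [if_pos hp, if_neg hq] at hpq
      exfalso
      have hmem : φ₂ ⟨A (toE3 (q : EuclideanSpace ℝ (Fin 4))), hAball _ (hyball q)⟩ ∈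
          B₁ ∩ B₂ := by
        constructor
        · rw [← hpq, ← hφ₁r]; exact ⟨_, rfl⟩
        · rw [← hφ₂r]; exact ⟨_, rfl⟩
      rw [← hφ₂s] at hmem
      obtain ⟨w, hw1, hw2⟩ := hmem
      have hwz := hinj2 hw2
      have hnA : ‖A (toE3 (q : EuclideanSpace ℝ (Fin 4)))‖ = 1 := by
        have := hw1; rw [hwz] at this; exact this
      rw [hAnorm] at hnA
      have := hsq q
      rw [hnA] at this
      have : ((q : EuclideanSpace ℝ (Fin 4)) 3) = 0 := by nlinarith
      exact hq (le_of_eq this.symm)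
    · rw [if_neg hp, if_pos hq] at hpq
      exfalso
      have hmem : φ₂ ⟨A (toE3 (p : EuclideanSpace ℝ (Fin 4))), hAball _ (hyball p)⟩ ∈
          B₁ ∩ B₂ := by
        constructor
        · rw [hpq, ← hφ₁r]; exact ⟨_, rfl⟩
        · rw [← hφ₂r]; exact ⟨_, rfl⟩
      rw [← hφ₂s] at hmem
      obtain ⟨w, hw1, hw2⟩ := hmem
      have hwz := hinj2 hw2
      have hnA : ‖A (toE3 (p : EuclideanSpace ℝ (Fin 4)))‖ = 1 := by
        have := hw1; rw [hwz] at this; exact this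
      rw [hAnorm] at hnA
      have := hsq p
      rw [hnA] at this
      have : ((p : EuclideanSpace ℝ (Fin 4)) 3) = 0 := by nlinarith
      exact hp (le_of_eq this.symm)
    · rw [if_neg hp, if_neg hq] at hpq
      have hy' := congrArg Subtype.val (hinj2 hpq)
      simp only at hy'
      have hy : toE3 (p : EuclideanSpace ℝ (Fin 4)) = toE3 (q : EuclideanSpace ℝ (Fin 4)) :=
        hAinj hy'
      apply Subtype.ext
      apply ext4 hy
      have h1 := hsq p; have h2 := hsq q
      rw [hy] at h1
      have := sq_cancel_aux (a := -((p : EuclideanSpace ℝ (Fin 4)) 3))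
        (b := -((q : EuclideanSpace ℝ (Fin 4)) 3))
        (by push_neg at hp; linarith) (by push_neg at hq; linarith) (by nlinarith)
      linarith
  -- surjectivity
  have hfsurj : Function.Surjective f := by
    intro m
    have hmem : m ∈ B₁ ∪ B₂ := by rw [hM]; trivial
    rcases hmem with hmem | hmem
    · rw [← hφ₁r] at hmem
      obtain ⟨b, rfl⟩ := hmem
      have hb1 : ‖(b : EuclideanSpace ℝ (Fin 3))‖ ≤ 1 := mem_closedBall_zero_iff.mp b.2
      set t : ℝ := Real.sqrt (1 - ‖(b : EuclideanSpace ℝ (Fin 3))‖ ^ 2) with ht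
      have ht0 : 0 ≤ t := Real.sqrt_nonneg _
      have ht2 : t ^ 2 = 1 - ‖(b : EuclideanSpace ℝ (Fin 3))‖ ^ 2 :=
        Real.sq_sqrt (by nlinarith [norm_nonneg (b : EuclideanSpace ℝ (Fin 3))])
      have hpn : ‖mk4 (b : EuclideanSpace ℝ (Fin 3)) t‖ = 1 := by
        apply sq_cancel_aux (norm_nonneg _) zero_le_one
        rw [norm_sq_eq, toE3_mk4, three_eq_last, mk4_last]
        rw [ht2]; ring
      refine ⟨⟨mk4 (b : EuclideanSpace ℝ (Fin 3)) t, mem_sphere_zero_iff_norm.mpr hpn⟩, ?_⟩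
      simp only [hf]
      rw [if_pos (by rw [three_eq_last, mk4_last]; exact ht0)]
      congr 1
      apply Subtype.ext
      simp [toE3_mk4]
    · rw [← hφ₂r] at hmem
      obtain ⟨c, rfl⟩ := hmem
      obtain ⟨y, hy1, hy2⟩ := hAsurj (c : EuclideanSpace ℝ (Fin 3))
      have hc1 : ‖(c : EuclideanSpace ℝ (Fin 3))‖ ≤ 1 := mem_closedBall_zero_iff.mp c.2
      have hy1' : ‖y‖ ≤ 1 := by rw [hy1]; exact hc1
      set t : ℝ := -Real.sqrt (1 - ‖y‖ ^ 2) with ht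
      have ht0 : t ≤ 0 := neg_nonpos.mpr (Real.sqrt_nonneg _)
      have ht2 : t ^ 2 = 1 - ‖y‖ ^ 2 := by
        rw [ht, neg_pow, Real.sq_sqrt (by nlinarith [norm_nonneg y])]; ring
      have hpn : ‖mk4 y t‖ = 1 := by
        apply sq_cancel_aux (norm_nonneg _) zero_le_one
        rw [norm_sq_eq, toE3_mk4, three_eq_last, mk4_last]
        rw [ht2]; ring
      refine ⟨⟨mk4 y t, mem_sphere_zero_iff_norm.mpr hpn⟩, ?_⟩
      simp only [hf]
      by_cases hcase : 0 ≤ (mk4 y t) 3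
      · -- then t = 0 and y is on the sphere
        rw [three_eq_last, mk4_last] at hcase
        have ht00 : t = 0 := le_antisymm ht0 hcase
        have hny : ‖y‖ = 1 := by
          apply sq_cancel_aux (norm_nonneg _) zero_le_one
          rw [ht00] at ht2
          nlinarith
        rw [if_pos (by rw [three_eq_last, mk4_last, ht00])]
        have hmemy : toE3 (mk4 y t) ∈ Metric.closedBall (0 : EuclideanSpace ℝ (Fin 3)) 1 := by
          rw [toE3_mk4, mem_closedBall_zero_iff, hny]
        have hnorm' : ‖((⟨toE3 (mk4 y t), hmemy⟩ :
            ↥(Metric.closedBall (0 : EuclideanSpace ℝ (Fin 3)) 1)) :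
            EuclideanSpace ℝ (Fin 3))‖ = 1 := by
          simp only [toE3_mk4]; exact hny
        obtain ⟨z, hz1, hz2⟩ := hgcomp ⟨toE3 (mk4 y t), hmemy⟩ hnorm'
        have hz1' : (z : EuclideanSpace ℝ (Fin 3)) = (c : EuclideanSpace ℝ (Fin 3)) := by
          rw [hz1]
          simp only [toE3_mk4]
          rw [← alexExt_sphere (g := g) y hny]
          exact hy2
        have hzc : z = c := Subtype.ext hz1'
        rw [← hzc, ← hz2]
      · rw [if_neg hcase]
        congr 1
        apply Subtype.ext
        simp only [toE3_mk4]
        exact hy2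
  -- conclusion
  haveI : CompactSpace ↥(Metric.sphere (0 : EuclideanSpace ℝ (Fin 4)) 1) := by infer_instance
  let e : ↥(Metric.sphere (0 : EuclideanSpace ℝ (Fin 4)) 1) ≃ M :=
    Equiv.ofBijective f ⟨hfinj, hfsurj⟩
  exact ⟨(Continuous.homeoOfEquivCompactToT2 (f := e) hfc).symm⟩
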